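/- For every t ∈ ℂ, the cubic polynomial s³ − t·s² + conj(t)·s − 1 (in the complex variable s) has a repeated complex root if and only if f(t) = 0, where f(t) = |t|⁴ − 8·Re(t³) + 18·|t|² − 27. -/

import Mathlib

/-- The function `f(t) = |t|⁴ − 8 Re(t³) + 18 |t|² − 27`. -/
noncomputable def fdisc (t : ℂ) : ℝ :=
  ‖t‖ ^ 4 - 8 * (t ^ 3).re + 18 * ‖t‖ ^ 2 - 27

open Polynomial

/-- The characteristic cubic `s³ − t·s² + conj(t)·s − 1`. -/
noncomputable def cubic (t : ℂ) : Polynomial ℂ :=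
  X ^ 3 - C t * X ^ 2 + C ((starRingEnd ℂ) t) * X - 1

theorem repeated_root_iff_fzero (t : ℂ) :
    (∃ z : ℂ, 2 ≤ (cubic t).rootMultiplicity z) ↔ fdisc t = 0 := by
  classical
  set P : Cubic ℂ := ⟨1, -t, (starRingEnd ℂ) t, -1⟩ with hPdef
  have ha : P.a ≠ 0 := one_ne_zero
  have hP : P.toPoly = cubic t := by
    simp only [Cubic.toPoly, cubic, hPdef, map_one, map_neg]
    ring
  have hsplit : Splits (P.toPoly.map (RingHom.id ℂ)) :=
    IsAlgClosed.splits _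
  obtain ⟨x, y, z, h3⟩ := (P.splits_iff_roots_eq_three ha).mp hsplit
  have hroots : (Cubic.map (RingHom.id ℂ) P).roots = P.toPoly.roots := by
    rw [Cubic.map_roots, Polynomial.map_id]
  have hdisc : ((fdisc t : ℂ)) = P.discr := by
    have h1 : ((‖t‖ : ℂ))^2 = t * (starRingEnd ℂ) t := by
      rw [Complex.mul_conj]
      norm_cast
      rw [Complex.sq_norm]
    have h2 : (((t^3).re : ℂ)) * 2 = t^3 + (starRingEnd ℂ) (t^3) := by
      rw [Complex.add_conj]; push_cast; ring
    have h3' : (starRingEnd ℂ) (t^3) = ((starRingEnd ℂ) t)^3 := by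
      rw [map_pow]
    simp only [fdisc, Cubic.discr, hPdef]
    push_cast
    rw [show ((‖t‖ : ℂ))^4 = (((‖t‖ : ℂ))^2)^2 by ring, h1]
    rw [h3'] at h2
    linear_combination (-4 : ℂ) * h2
  have hne : P.toPoly ≠ 0 := Cubic.ne_zero_of_a_ne_zero ha
  have key : P.discr ≠ 0 ↔ P.toPoly.roots.Nodup := by
    rw [Cubic.discr_ne_zero_iff_roots_nodup ha hsplit, hroots]
  constructor
  · rintro ⟨w, hw⟩
    rw [← hP] at hw
    have hc : 2 ≤ P.toPoly.roots.count w := by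
      rwa [Polynomial.count_roots]
    have : ¬ P.toPoly.roots.Nodup := by
      rw [Multiset.nodup_iff_count_le_one]
      push_neg
      exact ⟨w, by omega⟩
    have hd0 : P.discr = 0 := by
      by_contra h
      exact this (key.mp h)
    have : ((fdisc t : ℂ)) = 0 := by rw [hdisc, hd0]
    exact_mod_cast this
  · intro hf
    have hd0 : P.discr = 0 := by
      rw [← hdisc, hf, Complex.ofReal_zero]
    have hnd : ¬ P.toPoly.roots.Nodup := by
      intro h
      exact absurd hd0 (key.mpr h)
    rw [Multiset.nodup_iff_count_le_one] at hnd
    push_neg at hnd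
    obtain ⟨w, hw⟩ := hnd
    refine ⟨w, ?_⟩
    rw [← hP, ← Polynomial.count_roots]
    omega
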